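/- Let L(X) = Σᵢ AᵢXBᵢ with all Aᵢ, Bᵢ symmetric n×n and L positive definite in the trace inner product, P ∈ R^{n×s}. The Hessian of φ(α) = Φ(X_k + P α Pᵀ), a linear map on R^{s×s}, equals in Kronecker (vectorized) form H = Σ_{i=1}^ℓ (Pᵀ Bᵢ P) ⊗ (Pᵀ Aᵢ P). If P has full column rank, H is symmetric positive definite. -/

import Mathlib

open Matrix Kronecker

/-- Column-stacking vectorization: `vecb M (i, j) = M j i`, so that
`(Bᵀ ⊗ₖ A) *ᵥ vecb X = vecb (A * X * B)`. -/
def vecb {s : ℕ} (M : Matrix (Fin s) (Fin s) ℝ) : Fin s × Fin s → ℝ := fun p => M p.2 p.1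

/-- The Hessian of `φ(α) = Φ(X_k + P α Pᵀ)` is, in Kronecker (vectorized) form,
`H = Σᵢ (Pᵀ Bᵢ P) ⊗ (Pᵀ Aᵢ P)`: its quadratic form on `vec(β)` equals the second-order term
`⟨PβPᵀ, L(PβPᵀ)⟩` of `φ`. Moreover, `H` is symmetric, and if `P` has full column rank then
`H` is positive definite. -/
lemma kron_mulVec_vecb {s : ℕ} (M N X : Matrix (Fin s) (Fin s) ℝ) :
    (M ⊗ₖ N) *ᵥ vecb X = vecb (N * X * Mᵀ) := by
  ext ⟨p, q⟩
  simp only [Matrix.mulVec, dotProduct, vecb, kroneckerMap_apply, kroneckerMap,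
    Matrix.mul_apply, Matrix.transpose_apply, Fintype.sum_prod_type, Finset.sum_mul,
    Finset.mul_sum, Matrix.of_apply]
  exact Finset.sum_congr rfl fun r _ => Finset.sum_congr rfl fun t _ => by ring

lemma vecb_dot {s : ℕ} (β Y : Matrix (Fin s) (Fin s) ℝ) :
    vecb β ⬝ᵥ vecb Y = (βᵀ * Y).trace := by
  simp only [dotProduct, vecb, Matrix.trace, Matrix.diag, Matrix.mul_apply,
    Matrix.transpose_apply, Fintype.sum_prod_type]

lemma sum_mulVec' {m k ι : Type*} [Fintype k] (t : Finset ι)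
    (M : ι → Matrix m k ℝ) (v : k → ℝ) :
    (∑ i ∈ t, M i) *ᵥ v = ∑ i ∈ t, M i *ᵥ v := by
  ext j
  simp [Matrix.mulVec, dotProduct, Matrix.sum_apply, Finset.sum_apply, Finset.sum_mul]
  rw [Finset.sum_comm]

lemma dot_sum' {k ι : Type*} [Fintype k] (t : Finset ι) (v : k → ℝ) (w : ι → k → ℝ) :
    v ⬝ᵥ (∑ i ∈ t, w i) = ∑ i ∈ t, v ⬝ᵥ w i := by
  simp [dotProduct, Finset.mul_sum, Finset.sum_apply]
  rw [Finset.sum_comm]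

lemma mul_eq_zero_of_inj {n s m : ℕ} (P : Matrix (Fin n) (Fin s) ℝ)
    (hP : ∀ v : Fin s → ℝ, P *ᵥ v = 0 → v = 0)
    (Y : Matrix (Fin s) (Fin m) ℝ) (h : P * Y = 0) : Y = 0 := by
  ext i j
  have hc : P *ᵥ (fun k => Y k j) = 0 := by
    ext r
    have := congrFun (congrFun h r) j
    simpa [Matrix.mul_apply, Matrix.mulVec, dotProduct] using this
  have := congrFun (hP _ hc) i
  simpa using this


theorem stmt_3 {n s ℓ : ℕ}
    (A B : Fin ℓ → Matrix (Fin n) (Fin n) ℝ)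
    (hA : ∀ i, (A i)ᵀ = A i) (hB : ∀ i, (B i)ᵀ = B i)
    (hpd : ∀ X : Matrix (Fin n) (Fin n) ℝ, X ≠ 0 →
      0 < (Xᵀ * ∑ i, A i * X * B i).trace)
    (P : Matrix (Fin n) (Fin s) ℝ) :
    (∀ β : Matrix (Fin s) (Fin s) ℝ,
      vecb β ⬝ᵥ (∑ i, (Pᵀ * B i * P) ⊗ₖ (Pᵀ * A i * P)) *ᵥ vecb β
        = ((P * β * Pᵀ)ᵀ * ∑ i, A i * (P * β * Pᵀ) * B i).trace) ∧
    (∑ i, (Pᵀ * B i * P) ⊗ₖ (Pᵀ * A i * P))ᵀ = ∑ i, (Pᵀ * B i * P) ⊗ₖ (Pᵀ * A i * P) ∧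
    ((∀ v : Fin s → ℝ, P *ᵥ v = 0 → v = 0) →
      (∑ i, (Pᵀ * B i * P) ⊗ₖ (Pᵀ * A i * P)).PosDef) := by
  have quad : ∀ β : Matrix (Fin s) (Fin s) ℝ,
      vecb β ⬝ᵥ (∑ i, (Pᵀ * B i * P) ⊗ₖ (Pᵀ * A i * P)) *ᵥ vecb β
        = ((P * β * Pᵀ)ᵀ * ∑ i, A i * (P * β * Pᵀ) * B i).trace := by
    intro β
    rw [Matrix.mul_sum, Matrix.trace_sum, sum_mulVec' _, dot_sum' _]
    refine Finset.sum_congr rfl fun i _ => ?_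
    rw [kron_mulVec_vecb, vecb_dot]
    have hsym : (Pᵀ * B i * P)ᵀ = Pᵀ * B i * P := by
      rw [Matrix.transpose_mul, Matrix.transpose_mul, Matrix.transpose_transpose, hB i,
        Matrix.mul_assoc]
    rw [hsym]
    rw [show ((P * β * Pᵀ)ᵀ * (A i * (P * β * Pᵀ) * B i)).trace
        = (P * (βᵀ * (Pᵀ * A i * P * β * (Pᵀ * B i)))).trace by
      simp only [Matrix.transpose_mul, Matrix.transpose_transpose, Matrix.mul_assoc]]
    rw [Matrix.trace_mul_comm]
    simp only [Matrix.mul_assoc]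
    rw [Matrix.trace_mul_comm P]
    simp only [Matrix.mul_assoc]
    rw [Matrix.trace_mul_comm βᵀ]
    simp only [Matrix.mul_assoc]
  have hsym : (∑ i, (Pᵀ * B i * P) ⊗ₖ (Pᵀ * A i * P))ᵀ
      = ∑ i, (Pᵀ * B i * P) ⊗ₖ (Pᵀ * A i * P) := by
    rw [Matrix.transpose_sum]
    refine Finset.sum_congr rfl fun i _ => ?_
    rw [← Matrix.kroneckerMap_transpose]
    congr 1 <;>
      rw [Matrix.transpose_mul, Matrix.transpose_mul, Matrix.transpose_transpose] <;>
      simp [hA, hB, Matrix.mul_assoc]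
  refine ⟨quad, hsym, fun hP => ?_⟩
  rw [Matrix.posDef_iff_dotProduct_mulVec]
  constructor
  · simpa [Matrix.IsHermitian, Matrix.conjTranspose_eq_transpose_of_trivial] using hsym
  · intro v hv
    set β : Matrix (Fin s) (Fin s) ℝ := Matrix.of fun q p => v (p, q) with hβ
    have hvb : vecb β = v := by ext ⟨p, q⟩; rfl
    have hβ0 : β ≠ 0 := by
      intro h
      apply hv
      ext ⟨p, q⟩
      have := congrFun (congrFun h q) p
      simpa [hβ] using this
    have hX : P * β * Pᵀ ≠ 0 := by
      intro h
      apply hβ0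
      have h1 : P * (β * Pᵀ) = 0 := by rwa [← Matrix.mul_assoc]
      have h2 : β * Pᵀ = 0 := mul_eq_zero_of_inj P hP _ h1
      have h3 : P * βᵀ = 0 := by
        have := congrArg Matrix.transpose h2
        simpa [Matrix.transpose_mul] using this
      have h4 : βᵀ = 0 := mul_eq_zero_of_inj P hP _ h3
      have := congrArg Matrix.transpose h4
      simpa using this
    have := hpd _ hX
    rw [← quad β] at this
    simpa [hvb] using this
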